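/- Let a, b ≥ 1 be integers, let S = Δ^a ⊆ ℂ^a and T = Δ^b ⊆ ℂ^b be the open unit polydiscs, and let g : S × T → ℂ be holomorphic. Assume that for every t ∈ T the holomorphic function S ∋ s ↦ g(s,t) is algebraic. Then there exist integers N, A ≥ 1 and a nonempty open subset T₁ ⊆ T such that the set of those t ∈ T₁ for which there exists a nonzero polynomial P ∈ ℂ[X, s₁,…,s_a] of degree at most N in X and total degree at most A in (s₁,…,s_a) with P(g(s,t), s) = 0 for all s ∈ S, is dense in T₁. -/

import Mathlib

noncomputable section

/-- The open unit polydisc `Δ^ι ⊆ ℂ^ι`. -/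
def polydisc (ι : Type*) : Set (ι → ℂ) := {z | ∀ i, ‖z i‖ < 1}

/-- A function `h` is algebraic on `Ω ⊆ ℂ^ι` if there is a nonzero polynomial
`P ∈ ℂ[X, (z_i)_{i ∈ ι}]` with `P(h z, z) = 0` for all `z ∈ Ω`. -/
def AlgebraicOn {ι : Type*} (Ω : Set (ι → ℂ)) (h : (ι → ℂ) → ℂ) : Prop :=
  ∃ P : MvPolynomial (Option ι) ℂ, P ≠ 0 ∧
    ∀ z ∈ Ω, MvPolynomial.eval (fun v => v.elim (h z) z) P = 0

theorem dense_set_of_uniformly_bounded_degree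
    (a b : ℕ) (ha : 1 ≤ a) (hb : 1 ≤ b)
    (g : ((Fin a ⊕ Fin b) → ℂ) → ℂ)
    (hg : DifferentiableOn ℂ g (polydisc (Fin a ⊕ Fin b)))
    (halg : ∀ t ∈ polydisc (Fin b),
      AlgebraicOn (polydisc (Fin a)) fun s => g (Sum.elim s t)) :
    ∃ N A : ℕ, 1 ≤ N ∧ 1 ≤ A ∧
      ∃ T₁ : Set (Fin b → ℂ), T₁ ⊆ polydisc (Fin b) ∧ IsOpen T₁ ∧ T₁.Nonempty ∧
        T₁ ⊆ closure {t : Fin b → ℂ | t ∈ T₁ ∧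
          ∃ P : MvPolynomial (Option (Fin a)) ℂ, P ≠ 0 ∧
            MvPolynomial.degreeOf none P ≤ N ∧
            (∀ m ∈ P.support, (∑ j, m (some j)) ≤ A) ∧
            ∀ s ∈ polydisc (Fin a),
              MvPolynomial.eval (fun v => v.elim (g (Sum.elim s t)) s) P = 0} := by
  classical
  set T : Set (Fin b → ℂ) := polydisc (Fin b) with hT
  -- the sets of fixed degree bounds
  set E : ℕ → ℕ → Set (Fin b → ℂ) := fun N A =>
    {t | ∃ P : MvPolynomial (Option (Fin a)) ℂ, P ≠ 0 ∧
          MvPolynomial.degreeOf none P ≤ N ∧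
          (∀ m ∈ P.support, (∑ j, m (some j)) ≤ A) ∧
          ∀ s ∈ polydisc (Fin a),
            MvPolynomial.eval (fun v => v.elim (g (Sum.elim s t)) s) P = 0} with hE
  have hEmono : ∀ {N A N' A' : ℕ}, N ≤ N' → A ≤ A' → E N A ⊆ E N' A' := by
    intro N A N' A' hN hA t ⟨P, hP0, h1, h2, h3⟩
    exact ⟨P, hP0, h1.trans hN, fun m hm => (h2 m hm).trans hA, h3⟩
  -- every t ∈ T lies in some E N A
  have hcover : ∀ t ∈ T, ∃ N A, t ∈ E N A := by
    intro t ht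
    obtain ⟨P, hP0, hPz⟩ := halg t ht
    refine ⟨P.degreeOf none, P.totalDegree, P, hP0, le_rfl, ?_, hPz⟩
    intro m hm
    have h1 : ∑ j, m (some j) = ∑ v ∈ Finset.univ.image some, m v := by
      rw [Finset.sum_image]
      intro x _ y _ h
      exact Option.some_injective _ h
    have h2 : ∑ v ∈ Finset.univ.image some, m v ≤ ∑ v : Option (Fin a), m v :=
      Finset.sum_le_sum_of_subset (Finset.subset_univ _)
    have h3 : ∑ v : Option (Fin a), m v = ∑ v ∈ m.support, m v :=
      (Finset.sum_subset (Finset.subset_univ _)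
        (fun v _ hv => Finsupp.notMem_support_iff.mp hv)).symm
    have h4 : (m.sum fun _ e => e) ≤ P.totalDegree := MvPolynomial.le_totalDegree hm
    calc ∑ j, m (some j) = ∑ v ∈ Finset.univ.image some, m v := h1
      _ ≤ ∑ v : Option (Fin a), m v := h2
      _ = ∑ v ∈ m.support, m v := h3
      _ ≤ P.totalDegree := h4
  -- T is open and contains 0
  have hTopen : IsOpen T := by
    have : T = Set.pi Set.univ (fun _ : Fin b => Metric.ball (0 : ℂ) 1) := by
      ext z
      simp [hT, polydisc, Set.mem_pi, Complex.dist_eq]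
    rw [this]
    exact isOpen_set_pi Set.finite_univ (fun _ _ => Metric.isOpen_ball)
  have h0T : (0 : Fin b → ℂ) ∈ T := by
    intro i; simp
  -- a closed ball inside T
  obtain ⟨ε, hε, hball⟩ := Metric.isOpen_iff.mp hTopen 0 h0T
  set r : ℝ := ε / 2 with hr
  have hrpos : 0 < r := by positivity
  have hKT : Metric.closedBall (0 : Fin b → ℂ) r ⊆ T :=
    (Metric.closedBall_subset_ball (by linarith)).trans hball
  set K : Set (Fin b → ℂ) := Metric.closedBall 0 r with hK
  have hKclosed : IsClosed K := Metric.isClosed_closedBall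
  haveI : CompleteSpace K := hKclosed.completeSpace_coe
  -- Baire category on K
  set f : ℕ × ℕ → Set K := fun p => closure ((↑) ⁻¹' E p.1 p.2) with hf
  have hfclosed : ∀ p, IsClosed (f p) := fun p => isClosed_closure
  have hfunion : ⋃ p, f p = Set.univ := by
    rw [Set.eq_univ_iff_forall]
    intro x
    obtain ⟨N, A, hx⟩ := hcover x.1 (hKT x.2)
    exact Set.mem_iUnion.mpr ⟨(N, A), subset_closure hx⟩
  haveI : Nonempty K := ⟨⟨0, Metric.mem_closedBall_self hrpos.le⟩⟩
  obtain ⟨p, y, hy⟩ := nonempty_interior_of_iUnion_of_closed hfclosed hfunion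
  -- extract an ambient open set
  obtain ⟨W, hWopen, hWeq⟩ := isOpen_induced_iff.mp (isOpen_interior (s := f p))
  have hyW : (y : Fin b → ℂ) ∈ W := by
    have : y ∈ ((↑) : K → Fin b → ℂ) ⁻¹' W := by rw [hWeq]; exact hy
    exact this
  have hWK : W ∩ K ⊆ closure (E p.1 p.2) := by
    intro z ⟨hzW, hzK⟩
    have h1 : (⟨z, hzK⟩ : K) ∈ ((↑) : K → Fin b → ℂ) ⁻¹' W := hzW
    rw [hWeq] at h1
    have h2 : (⟨z, hzK⟩ : K) ∈ closure (((↑) : K → Fin b → ℂ) ⁻¹' E p.1 p.2) :=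
      interior_subset h1
    have := (continuous_subtype_val.closure_preimage_subset (E p.1 p.2)) h2
    exact this
  -- T₁ := W ∩ open ball
  set T₁ : Set (Fin b → ℂ) := W ∩ Metric.ball 0 r with hT₁
  have hT₁open : IsOpen T₁ := hWopen.inter Metric.isOpen_ball
  have hT₁ne : T₁.Nonempty := by
    have hycl : (y : Fin b → ℂ) ∈ closure (Metric.ball (0 : Fin b → ℂ) r) := by
      rw [closure_ball (0 : Fin b → ℂ) hrpos.ne']
      exact y.2
    obtain ⟨δ, hδ, hδW⟩ := Metric.isOpen_iff.mp hWopen _ hyW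
    obtain ⟨z, hz1, hz2⟩ := Metric.mem_closure_iff.mp hycl δ hδ
    exact ⟨z, hδW (by rwa [dist_comm] at hz2), hz1⟩
  have hT₁T : T₁ ⊆ T := fun z hz => hKT (Metric.ball_subset_closedBall hz.2)
  have hT₁cl : T₁ ⊆ closure (E p.1 p.2) := fun z hz =>
    hWK ⟨hz.1, Metric.ball_subset_closedBall hz.2⟩
  refine ⟨max 1 p.1, max 1 p.2, le_max_left _ _, le_max_left _ _, T₁, hT₁T, hT₁open, hT₁ne, ?_⟩
  have key : T₁ ⊆ closure (T₁ ∩ E (max 1 p.1) (max 1 p.2)) := by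
    intro z hz
    have h1 : z ∈ T₁ ∩ closure (E (max 1 p.1) (max 1 p.2)) :=
      ⟨hz, closure_mono (hEmono (le_max_right _ _) (le_max_right _ _)) (hT₁cl hz)⟩
    exact hT₁open.inter_closure h1
  refine key.trans (closure_mono ?_)
  rintro z ⟨hz1, hz2⟩
  exact ⟨hz1, hz2⟩

end
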